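/- (Generalization, linear case) Let (x_i, y_i), i = 1,…,N, be a finite dataset with x_i ∈ E and y_i ∈ {−1,+1}, let w ∈ E and let ρ' > 0. If y_i ⟨Ψ x_i, Ψ w⟩ ≥ ρ' for all i, then y_i ⟨g x_i, Ψ w⟩ ≥ ρ' for all i and for every g ∈ G; that is, a separator of the averaged data with margin ρ' separates the entire G-transformed dataset with the same margin. -/

import Mathlib

open MeasureTheory RealInnerProductSpace

/-- Generalization, linear case: if `y i * ⟪Ψ xᵢ, Ψ w⟫ ≥ ρ'` for all `i`,
then `y i * ⟪g xᵢ, Ψ w⟫ ≥ ρ'` for all `i` and all `g ∈ G`: a separator of the averaged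
data with margin `ρ'` separates the entire `G`-transformed dataset with the same margin. -/
theorem generalization_linear
    {E : Type*} [NormedAddCommGroup E] [InnerProductSpace ℝ E] [FiniteDimensional ℝ E]
    {G : Type*} [Group G] [TopologicalSpace G] [IsTopologicalGroup G] [CompactSpace G]
    [MeasurableSpace G] [BorelSpace G]
    (μ : Measure G) [IsProbabilityMeasure μ] [μ.IsMulLeftInvariant] [μ.IsMulRightInvariant]
    [μ.IsInvInvariant]
    (ρ : G →* (E ≃ₗᵢ[ℝ] E)) (hρ : Continuous fun p : G × E => ρ p.1 p.2)
    (Ψ : E → E) (hΨ : ∀ ω : E, Ψ ω = ∫ g, ρ g ω ∂μ)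
    (N : ℕ) (x : Fin N → E) (y : Fin N → ℝ) (hy : ∀ i, y i = 1 ∨ y i = -1)
    (w : E) (ρ' : ℝ) (hρ' : 0 < ρ')
    (hsep : ∀ i, ρ' ≤ y i * ⟪Ψ (x i), Ψ w⟫) :
    ∀ (i : Fin N) (g : G), ρ' ≤ y i * ⟪ρ g (x i), Ψ w⟫ := by
  intro i g
  have cont : ∀ ω : E, Continuous fun g : G => ρ g ω := fun ω =>
    hρ.comp (continuous_id.prodMk continuous_const)
  have integ : ∀ ω : E, Integrable (fun g : G => ρ g ω) μ := fun ω =>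
    (cont ω).integrable_of_hasCompactSupport (HasCompactSupport.of_compactSpace _)
  have hinv : ∀ h : G, ρ h (Ψ w) = Ψ w := by
    intro h
    rw [hΨ]
    calc ρ h (∫ g, ρ g w ∂μ)
        = ∫ g, ρ h (ρ g w) ∂μ :=
          (ContinuousLinearMap.integral_comp_comm
            ((ρ h).toLinearIsometry.toContinuousLinearMap) (integ w)).symm
      _ = ∫ g, ρ (h * g) w ∂μ := by simp [map_mul]
      _ = ∫ g, ρ g w ∂μ := by
          exact integral_mul_left_eq_self (fun g => ρ g w) h
  have h1 : ∀ h : G, ⟪ρ h (x i), Ψ w⟫ = ⟪x i, Ψ w⟫ := by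
    intro h
    conv_lhs => rw [← hinv h]
    exact (ρ h).inner_map_map _ _
  have h2 : ⟪Ψ (x i), Ψ w⟫ = ⟪x i, Ψ w⟫ := by
    rw [hΨ (x i), real_inner_comm, ← integral_inner (integ (x i))]
    have hfun : (fun h : G => (⟪Ψ w, ρ h (x i)⟫ : ℝ)) = fun _ => ⟪x i, Ψ w⟫ :=
      funext fun h => by rw [real_inner_comm, h1]
    rw [hfun, integral_const]
    simp
  have := hsep i
  rw [h2] at this
  rw [h1 g]
  exact this
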